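/- Let k ≥ 2 and let T_k be the string over the alphabet {a_1,...,a_k, $_1,...,$_k} (all 2k letters distinct) defined as T_k = $_1 a_1 $_2 a_1 a_2 $_3 a_1 a_2 a_3 ⋯ $_k a_1 a_2 ⋯ a_k, i.e., the concatenation over i = 1..k of the blocks $_i a_1 a_2 ⋯ a_i. Then the set of maximal repeats of T_k is exactly {ε, a_1, a_1 a_2, ..., a_1 a_2 ⋯ a_{k-1}}. -/

import Mathlib

open Finset

attribute [-instance] Sum.instBEq

variable {α : Type*}

/-- Number of occurrences of `S` in `T`: positions `i` with `T[i..i+|S|-1] = S`. -/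
def occ [DecidableEq α] (T S : List α) : ℕ :=
  ((Finset.range (T.length + 1)).filter fun i => (T.drop i).take S.length = S).card

/-- `S` is a maximal repeat of `T`. -/
def MaxRepeat [DecidableEq α] (T S : List α) : Prop :=
  2 ≤ occ T S ∧ ∀ a : α, occ T (a :: S) < occ T S ∧ occ T (S ++ [a]) < occ T S

instance [DecidableEq α] [Fintype α] (T S : List α) : Decidable (MaxRepeat T S) := by
  unfold MaxRepeat; infer_instance

/-- The finite set of maximal repeats of `T`. -/
def MRset [DecidableEq α] [Fintype α] (T : List α) : Finset (List α) :=
  (T.tails.flatMap List.inits).toFinset.filter fun S => MaxRepeat T S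

/-- Number of right extensions of `S` in `T`. -/
def rext [DecidableEq α] [Fintype α] (T S : List α) : ℕ :=
  (Finset.univ.filter fun a : α => (S ++ [a]) <:+: T).card

/-- Number of left extensions of `S` in `T`. -/
def lext [DecidableEq α] [Fintype α] (T S : List α) : ℕ :=
  (Finset.univ.filter fun a : α => (a :: S) <:+: T).card

/-- Total number of right extensions of maximal repeats of `T`. -/
def er [DecidableEq α] [Fintype α] (T : List α) : ℕ := ∑ S ∈ MRset T, rext T S

/-- Total number of left extensions of maximal repeats of `T`. -/
def el [DecidableEq α] [Fintype α] (T : List α) : ℕ := ∑ S ∈ MRset T, lext T S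

/-- The string `T_k = $_1 a_1 $_2 a_1 a_2 ⋯ $_k a_1 ⋯ a_k` over the alphabet
`Fin k ⊕ Fin k`, where `a_{i+1} = Sum.inl i` and `$_{i+1} = Sum.inr i`. -/
def Tk (k : ℕ) : List (Fin k ⊕ Fin k) :=
  (List.finRange k).flatMap fun i =>
    Sum.inr i :: ((List.finRange k).take ((i : ℕ) + 1)).map Sum.inl

/-- The string `a_1 a_2 ⋯ a_i` over the alphabet `Fin k ⊕ Fin k`. -/
def Pk (k i : ℕ) : List (Fin k ⊕ Fin k) :=
  ((List.finRange k).take i).map Sum.inl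

section AuxGeneric

variable [DecidableEq α]

lemma count_eq_card_pos (T : List α) (a : α) :
    ((Finset.range T.length).filter fun n => T[n]? = some a).card = T.count a := by
  induction T with
  | nil => simp
  | cons b T ih =>
    rw [Finset.card_filter] at ih ⊢
    rw [List.length_cons, Finset.sum_range_succ']
    simp only [List.getElem?_cons_succ, List.getElem?_cons_zero, ih, List.count_cons]
    by_cases h : b = a <;> simp [h]

lemma occ_le_count (T S : List α) (a : α) (ha : a ∈ S) : occ T S ≤ T.count a := by
  rw [← count_eq_card_pos]
  apply Finset.card_le_card_of_injOn (fun p => p + S.idxOf a)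
  · intro p hp
    simp only [Finset.mem_coe, Finset.mem_filter, Finset.mem_range] at hp ⊢
    have ht : S.idxOf a < S.length := List.idxOf_lt_length_iff.2 ha
    have h1 : T[p + S.idxOf a]? = some a := by
      rw [← List.getElem?_drop, ← List.getElem?_take_of_lt ht, hp.2, List.getElem?_idxOf ha]
    have h2 : p + S.idxOf a < T.length := by
      by_contra hc
      push_neg at hc
      rw [List.getElem?_eq_none_iff.2 hc] at h1
      exact nomatch h1
    exact ⟨h2, h1⟩
  · intro x _ y _ hxy
    exact add_right_cancel hxy

lemma occ_nil (T : List α) : occ T [] = T.length + 1 := by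
  simp [occ]

lemma lt_length_of_occurrence {T S : List α} {p : ℕ} (hS : S ≠ [])
    (h : (T.drop p).take S.length = S) : p < T.length := by
  by_contra hc
  push_neg at hc
  rw [List.drop_eq_nil_iff.2 hc] at h
  simp at h
  exact hS h

lemma occ_le_length (T : List α) {S : List α} (hS : S ≠ []) : occ T S ≤ T.length := by
  rw [occ, ← Finset.card_range T.length]
  apply Finset.card_le_card
  intro p hp
  simp only [Finset.mem_filter, Finset.mem_range] at hp ⊢
  exact lt_length_of_occurrence hS hp.2

lemma exists_interval {p : ℕ} (f : ℕ → ℕ) : ∀ {k : ℕ}, f 0 ≤ p → p < f k →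
    ∃ i, i < k ∧ f i ≤ p ∧ p < f (i + 1)
  | 0, h0, hk => absurd (h0.trans_lt hk) (lt_irrefl _)
  | (k+1), h0, hk => by
    by_cases h : p < f k
    · obtain ⟨i, hi, h1, h2⟩ := exists_interval f h0 h
      exact ⟨i, by omega, h1, h2⟩
    · exact ⟨k, by omega, by omega, hk⟩

lemma sum_map_ite {β : Type*} [DecidableEq β] (l : List β) (c : β) :
    (l.map fun b => if b = c then 1 else 0).sum = l.count c := by
  induction l with
  | nil => simp
  | cons b l ih =>
    simp only [List.map_cons, List.sum_cons, List.count_cons, ih]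
    by_cases h : b = c <;> simp [h, Nat.add_comm]

lemma sum_range_ite (k c : ℕ) :
    ((List.range k).map fun n => if c ≤ n then 1 else 0).sum = k - c := by
  induction k with
  | zero => simp
  | succ k ih =>
    rw [List.range_succ, List.map_append, List.sum_append, ih]
    by_cases h : c ≤ k <;> simp [h] <;> omega

end AuxGeneric
section AuxTk

def blk (k : ℕ) : Fin k → List (Fin k ⊕ Fin k) := fun b => Sum.inr b :: Pk k ((b : ℕ) + 1)

lemma Tk_eq (k : ℕ) : Tk k = (List.finRange k).flatMap (blk k) := rfl

def off : ℕ → ℕ := fun i => ((List.range i).map (· + 2)).sum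

lemma off_succ (i : ℕ) : off (i + 1) = off i + (i + 2) := by
  simp [off, List.range_succ]

lemma off_strictMono : StrictMono off :=
  strictMono_nat_of_lt_succ fun i => by rw [off_succ]; omega

lemma finRange_map_val (k : ℕ) : (List.finRange k).map Fin.val = List.range k := by
  apply List.ext_getElem <;> simp [List.finRange]

lemma length_Pk {k i : ℕ} (h : i ≤ k) : (Pk k i).length = i := by
  simp [Pk]; omega

lemma length_blk {k : ℕ} (b : Fin k) : (blk k b).length = (b : ℕ) + 2 := by
  have hb : (b : ℕ) + 1 ≤ k := b.isLt
  simp [blk, length_Pk hb]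

lemma length_Tk (k : ℕ) : (Tk k).length = off k := by
  rw [Tk_eq, List.length_flatMap]
  have h1 : (List.finRange k).map (List.length ∘ blk k)
      = (List.range k).map (· + 2) := by
    rw [← finRange_map_val, List.map_map]
    exact List.map_congr_left fun b _ => length_blk b
  change (List.map (List.length ∘ blk k) (List.finRange k)).sum = _; rw [h1]
  rfl

lemma getElem_finRange_val {k i : ℕ} (h : i < (List.finRange k).length) :
    (((List.finRange k)[i]'h : Fin k) : ℕ) = i := by
  simp [List.getElem_finRange]

lemma drop_off {k : ℕ} : ∀ {i : ℕ}, i ≤ k →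
    (Tk k).drop (off i) = ((List.finRange k).drop i).flatMap (blk k)
  | 0, _ => by simp [Tk_eq, off]
  | (i+1), h => by
    have hik : i < k := h
    have ih := drop_off (k := k) (Nat.le_of_lt hik)
    have hlen : i < (List.finRange k).length := by simpa using hik
    rw [off_succ, ← List.drop_drop, ih, List.drop_eq_getElem_cons hlen, List.flatMap_cons,
      List.drop_left' (by rw [length_blk, getElem_finRange_val])]

lemma count_inr {k : ℕ} (c : Fin k) : (Tk k).count (Sum.inr c) = 1 := by
  rw [Tk_eq, List.count_flatMap]
  have h1 : ∀ b ∈ List.finRange k,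
      (List.count (Sum.inr c) ∘ blk k) b = if b = c then 1 else 0 := by
    intro b _
    have h0 : List.count (Sum.inr c : Fin k ⊕ Fin k) (Pk k ((b : ℕ) + 1)) = 0 := by
      refine List.count_eq_zero_of_not_mem fun hm => ?_
      rw [Pk, List.mem_map] at hm
      obtain ⟨x, -, hx⟩ := hm
      exact nomatch hx
    simp only [Function.comp, blk, List.count_cons, h0]
    by_cases h : b = c <;> simp [h]
  rw [List.map_congr_left h1, sum_map_ite,
    List.count_eq_one_of_mem (List.nodup_finRange k) (List.mem_finRange c)]

lemma mem_take_finRange {k n : ℕ} (c : Fin k) :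
    c ∈ (List.finRange k).take n ↔ (c : ℕ) < n := by
  have hmap : ((List.finRange k).take n).map Fin.val = List.range (min n k) := by
    rw [List.map_take, finRange_map_val, List.take_range]
  constructor
  · intro h
    have h2 : (c : ℕ) ∈ List.range (min n k) := hmap ▸ List.mem_map_of_mem (f := Fin.val) h
    have := List.mem_range.1 h2
    omega
  · intro h
    have h2 : (c : ℕ) ∈ List.range (min n k) := List.mem_range.2 (by omega)
    rw [← hmap] at h2
    obtain ⟨x, hx, he⟩ := List.mem_map.1 h2
    rwa [← Fin.val_injective he]

lemma count_inl {k : ℕ} (c : Fin k) : (Tk k).count (Sum.inl c) = k - (c : ℕ) := by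
  rw [Tk_eq, List.count_flatMap]
  have h1 : ∀ b ∈ List.finRange k,
      (List.count (Sum.inl c) ∘ blk k) b = if (c : ℕ) ≤ (b : ℕ) then 1 else 0 := by
    intro b _
    have hnd : ((List.finRange k).take ((b : ℕ) + 1)).Nodup :=
      (List.take_sublist _ _).nodup (List.nodup_finRange k)
    simp only [Function.comp, blk, Pk, List.count_cons]
    rw [List.count_map_of_injective _ Sum.inl Sum.inl_injective c]
    by_cases h : (c : ℕ) ≤ (b : ℕ)
    · rw [List.count_eq_one_of_mem hnd ((mem_take_finRange c).2 (by omega))]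
      simp [h]
    · rw [List.count_eq_zero_of_not_mem
        (fun hm => h (by have := (mem_take_finRange c).1 hm; omega))]
      simp [h]
  rw [List.map_congr_left h1]
  have h2 : (List.finRange k).map (fun b : Fin k => if (c : ℕ) ≤ (b : ℕ) then 1 else 0)
      = (List.range k).map (fun n => if (c : ℕ) ≤ n then 1 else 0) := by
    rw [← finRange_map_val, List.map_map]
    rfl
  rw [h2, sum_range_ite]

end AuxTk
section AuxSlice

lemma slice_take {k j m n : ℕ} (hjm : j + m ≤ n) :
    (((List.finRange k).take n).drop j).take m = ((List.finRange k).drop j).take m := by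
  rw [List.drop_take, List.take_take, min_eq_left (by omega)]

lemma length_slice {k j m : ℕ} (hjm : j + m ≤ k) :
    ((((List.finRange k).drop j).take m).map Sum.inl : List (Fin k ⊕ Fin k)).length = m := by
  simp
  omega

lemma occurrence_at {k j m i : ℕ} (hm : 1 ≤ m) (hji : j + m ≤ i + 1) (hik : i < k) :
    ((Tk k).drop (off i + (1 + j))).take m
      = (((List.finRange k).drop j).take m).map Sum.inl := by
  have hlen : i < (List.finRange k).length := by simpa using hik
  rw [← List.drop_drop, drop_off (le_of_lt hik), List.drop_eq_getElem_cons hlen,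
    List.flatMap_cons, List.drop_append]
  have hlb : (blk k ((List.finRange k)[i]'hlen)).length = i + 2 := by
    rw [length_blk, getElem_finRange_val]
  rw [show 1 + j - (blk k ((List.finRange k)[i]'hlen)).length = 0 by omega, List.drop_zero]
  have hb : List.drop (1 + j) (blk k ((List.finRange k)[i]'hlen))
      = (((List.finRange k).take (i + 1)).drop j).map Sum.inl := by
    rw [blk, Nat.add_comm 1 j, List.drop_succ_cons, Pk, getElem_finRange_val, List.map_drop]
  rw [hb, List.take_append]
  have hX : (List.map (Sum.inl : Fin k → Fin k ⊕ Fin k)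
      (List.drop j (List.take (i + 1) (List.finRange k)))).length = i + 1 - j := by
    simp
    omega
  rw [hX, show m - (i + 1 - j) = 0 by omega, List.take_zero, List.append_nil,
    ← List.map_take, slice_take hji]

lemma occ_slice {k j m : ℕ} (hm : 1 ≤ m) (hjm : j + m ≤ k) :
    occ (Tk k) ((((List.finRange k).drop j).take m).map Sum.inl) = k + 1 - (j + m) := by
  have hlen := length_slice (k := k) (j := j) (m := m) hjm
  set S : List (Fin k ⊕ Fin k) := (((List.finRange k).drop j).take m).map Sum.inl with hSdef
  have hSne : S ≠ [] := by
    intro hnil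
    rw [hnil] at hlen
    simp at hlen
    omega
  apply le_antisymm
  · have hjm1 : j + (m - 1) < (List.finRange k).length := by simp; omega
    have hml : m - 1 < (((List.finRange k).drop j).take m).length := by simp; omega
    have h1 : ((((List.finRange k).drop j).take m)[m-1]'hml : Fin k)
        = (List.finRange k)[j + (m-1)]'hjm1 := by
      rw [List.getElem_take, List.getElem_drop]
    have hmem : Sum.inl ((List.finRange k)[j + (m-1)]'hjm1) ∈ S := by
      rw [hSdef]
      exact List.mem_map_of_mem (h1 ▸ List.getElem_mem hml)
    calc occ (Tk k) S ≤ (Tk k).count (Sum.inl ((List.finRange k)[j + (m-1)]'hjm1)) :=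
          occ_le_count _ _ _ hmem
      _ = k - (((List.finRange k)[j + (m-1)]'hjm1 : Fin k) : ℕ) := count_inl _
      _ = k + 1 - (j + m) := by rw [getElem_finRange_val]; omega
  · rw [occ, hlen]
    have hsub : (Finset.Icc (j + m - 1) (k - 1)).image (fun i => off i + (1 + j)) ⊆
        (Finset.range ((Tk k).length + 1)).filter fun p => ((Tk k).drop p).take m = S := by
      intro p hp
      simp only [Finset.mem_image, Finset.mem_Icc] at hp
      obtain ⟨i, ⟨hi1, hi2⟩, rfl⟩ := hp
      have hik : i < k := by omega
      have hocc : ((Tk k).drop (off i + (1 + j))).take m = S :=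
        occurrence_at hm (by omega) hik
      rw [Finset.mem_filter, Finset.mem_range]
      refine ⟨?_, hocc⟩
      have hplen : off i + (1 + j) < (Tk k).length := by
        have := lt_length_of_occurrence hSne (by rw [hlen]; exact hocc)
        exact this
      omega
    calc k + 1 - (j + m) = (Finset.Icc (j + m - 1) (k - 1)).card := by
          rw [Nat.card_Icc]; omega
      _ = ((Finset.Icc (j + m - 1) (k - 1)).image (fun i => off i + (1 + j))).card :=
          (Finset.card_image_of_injOn fun a _ b _ hab =>
            off_strictMono.injective (by omega)).symm
      _ ≤ _ := Finset.card_le_card hsub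

end AuxSlice
section AuxStructure

lemma slice_of_occurrence {k : ℕ} {S : List (Fin k ⊕ Fin k)} {p : ℕ} (hS : S ≠ [])
    (hno : ∀ c : Fin k, Sum.inr c ∉ S)
    (h : ((Tk k).drop p).take S.length = S) :
    ∃ j, j + S.length ≤ k ∧ S = (((List.finRange k).drop j).take S.length).map Sum.inl := by
  have hm : 1 ≤ S.length := List.length_pos_iff.2 hS
  have hplen : p < (Tk k).length := lt_length_of_occurrence hS h
  rw [length_Tk] at hplen
  obtain ⟨i, hik, h1, h2⟩ := exists_interval off (by simp [off]) hplen
  rw [off_succ] at h2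
  obtain ⟨r, rfl⟩ : ∃ r, p = off i + r := ⟨p - off i, by omega⟩
  have hr : r < i + 2 := by omega
  have hlenfr : i < (List.finRange k).length := by simpa using hik
  rw [← List.drop_drop, drop_off (le_of_lt hik), List.drop_eq_getElem_cons hlenfr,
    List.flatMap_cons] at h
  rcases Nat.eq_zero_or_pos r with hr0 | hrpos
  · exfalso
    subst hr0
    rw [List.drop_zero, blk, List.cons_append,
      List.take_cons (by omega : 0 < S.length)] at h
    have : Sum.inr ((List.finRange k)[i]'hlenfr) ∈ S := by
      rw [← h]; exact List.mem_cons_self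
    exact hno _ this
  · obtain ⟨j, rfl⟩ : ∃ j, r = 1 + j := ⟨r - 1, by omega⟩
    have hji : j ≤ i := by omega
    rw [blk, List.cons_append, Nat.add_comm 1 j, List.drop_succ_cons,
      List.drop_append] at h
    have hPklen : (Pk k ((((List.finRange k)[i]'hlenfr : Fin k) : ℕ) + 1)).length = i + 1 := by
      rw [getElem_finRange_val, length_Pk (by omega)]
    have hdroplen : (List.drop j (Pk k ((((List.finRange k)[i]'hlenfr : Fin k) : ℕ) + 1))).length
        = i + 1 - j := by
      rw [List.length_drop, hPklen]
    by_cases hcase : S.length ≤ i + 1 - j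
    · refine ⟨j, by omega, ?_⟩
      rw [List.take_append, hdroplen,
        show S.length - (i + 1 - j) = 0 by omega, List.take_zero, List.append_nil] at h
      rw [Pk, getElem_finRange_val] at h
      rw [← h, ← List.map_drop, ← List.map_take, slice_take (by omega),
        List.length_map, List.length_take, List.length_drop,
        min_eq_left (by simp; omega)]
    · exfalso
      push_neg at hcase
      have hj0 : j - (Pk k ((((List.finRange k)[i]'hlenfr : Fin k) : ℕ) + 1)).length = 0 := by
        rw [hPklen]; omega
      rw [hj0, List.drop_zero] at h
      rcases Nat.lt_or_ge (i + 1) k with hik2 | hik2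
      · have hlenfr2 : i + 1 < (List.finRange k).length := by simpa using hik2
        have hrw : (List.drop (i + 1) (List.finRange k)).flatMap (blk k)
            = blk k ((List.finRange k)[i+1]'hlenfr2)
              ++ ((List.finRange k).drop (i + 2)).flatMap (blk k) := by
          rw [List.drop_eq_getElem_cons hlenfr2, List.flatMap_cons]
        have hgw : S[i + 1 - j]? = some (Sum.inr ((List.finRange k)[i+1]'hlenfr2)) := by
          rw [← h, List.getElem?_take_of_lt (by omega : i + 1 - j < S.length),
            List.getElem?_append_right (by rw [hdroplen]), hdroplen, Nat.sub_self, hrw, blk,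
            List.cons_append, List.getElem?_cons_zero]
        exact hno _ (List.mem_of_getElem? hgw)
      · have hnil : (List.drop (i + 1) (List.finRange k)).flatMap (blk k) = [] := by
          rw [List.drop_eq_nil_iff.2 (by simp; omega), List.flatMap_nil]
        rw [hnil, List.append_nil] at h
        have hlen2 := congrArg List.length h
        rw [List.length_take, hdroplen] at hlen2
        omega

end AuxStructure
lemma exists_occurrence {T S : List α} [DecidableEq α] (h : 1 ≤ occ T S) :
    ∃ p, (T.drop p).take S.length = S := by
  rw [occ] at h
  obtain ⟨p, hp⟩ := Finset.card_pos.1 h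
  exact ⟨p, (Finset.mem_filter.1 hp).2⟩

lemma no_inr_Pk {k i : ℕ} (c : Fin k) : (Sum.inr c : Fin k ⊕ Fin k) ∉ Pk k i := by
  intro h
  rw [Pk] at h
  obtain ⟨x, -, hx⟩ := List.mem_map.1 h
  exact nomatch hx

lemma get?_finRange {k n : ℕ} (h : n < k) :
    (List.finRange k)[n]? = some ((List.finRange k)[n]'(by simpa using h)) := by
  rw [List.getElem?_eq_getElem (by simpa using h)]

/-- the maximal repeats of `T_k` are exactly
`ε, a_1, a_1 a_2, …, a_1 ⋯ a_{k-1}`. -/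
theorem maximal_repeats_Tk (k : ℕ) (hk : 2 ≤ k) (S : List (Fin k ⊕ Fin k)) :
    MaxRepeat (Tk k) S ↔ S = [] ∨ ∃ i, 1 ≤ i ∧ i ≤ k - 1 ∧ S = Pk k i := by
  have hlenTk : 1 ≤ (Tk k).length := by
    rw [length_Tk]
    have h0 : off 0 < off k := off_strictMono (show 0 < k by omega)
    have h00 : off 0 = 0 := by simp [off]
    omega
  constructor
  · rintro ⟨hocc2, hmax⟩
    by_cases hS : S = []
    · exact Or.inl hS
    right
    have hno : ∀ c : Fin k, Sum.inr c ∉ S := by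
      intro c hc
      have h1 := occ_le_count (Tk k) S _ hc
      rw [count_inr] at h1
      omega
    obtain ⟨p, hp⟩ := exists_occurrence (T := Tk k) (S := S) (by omega)
    obtain ⟨j, hjk, hSslice⟩ := slice_of_occurrence hS hno hp
    have hm : 1 ≤ S.length := List.length_pos_iff.2 hS
    set m := S.length with hmdef
    have hoccS : occ (Tk k) S = k + 1 - (j + m) := by
      rw [hSslice, occ_slice hm hjk]
    have h2le : 2 ≤ k + 1 - (j + m) := hoccS ▸ hocc2
    have hj0 : j = 0 := by
      by_contra hj
      have hj1 : 1 ≤ j := by omega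
      have hfr : j - 1 < (List.finRange k).length := by simp; omega
      have hid : (Sum.inl ((List.finRange k)[j-1]'hfr) :: S)
          = (((List.finRange k).drop (j-1)).take (m+1)).map Sum.inl := by
        rw [List.drop_eq_getElem_cons hfr, show j - 1 + 1 = j by omega,
          List.take_cons (by omega : 0 < m + 1), List.map_cons,
          show m + 1 - 1 = m by omega, ← hSslice]
      have hocc3 := (hmax (Sum.inl ((List.finRange k)[j-1]'hfr))).1
      rw [hid, occ_slice (by omega) (by omega), hoccS] at hocc3
      omega
    refine ⟨m, hm, by omega, ?_⟩
    rw [hSslice, hj0, List.drop_zero]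
    rfl
  · rintro (rfl | ⟨i, hi1, hi2, rfl⟩)
    · refine ⟨by rw [occ_nil]; omega, fun a => ⟨?_, ?_⟩⟩
      · have h1 : occ (Tk k) [a] ≤ (Tk k).length := occ_le_length _ (by simp)
        rw [occ_nil]
        omega
      · have h1 : occ (Tk k) ([] ++ [a]) ≤ (Tk k).length := occ_le_length _ (by simp)
        rw [occ_nil]
        omega
    · have hik : i < k := by omega
      have hPid : Pk k i = (((List.finRange k).drop 0).take i).map Sum.inl := by
        rw [List.drop_zero]; rfl
      have hoccP : occ (Tk k) (Pk k i) = k + 1 - i := by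
        rw [hPid, occ_slice hi1 (by omega), Nat.zero_add]
      have hlenP : (Pk k i).length = i := length_Pk (by omega)
      have hocc2 : 2 ≤ occ (Tk k) (Pk k i) := by rw [hoccP]; omega
      refine ⟨hocc2, fun a => ⟨?_, ?_⟩⟩
      · rcases Nat.lt_or_ge (occ (Tk k) (a :: Pk k i)) 2 with hlt | hge
        · omega
        · exfalso
          rcases a with b | c
          swap
          · have h1 := occ_le_count (Tk k) _ _ (List.mem_cons_self (a := Sum.inr c) (l := Pk k i))
            rw [count_inr] at h1
            omega
          obtain ⟨p, hp⟩ := exists_occurrence (T := Tk k) (S := Sum.inl b :: Pk k i) (by omega)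
          have hno : ∀ c : Fin k, Sum.inr c ∉ (Sum.inl b :: Pk k i) := by
            intro c hc
            rcases List.mem_cons.1 hc with h | h
            · exact nomatch h
            · exact no_inr_Pk c h
          obtain ⟨j, hjk, hslice⟩ := slice_of_occurrence (by simp) hno hp
          have hlen1 : (Sum.inl b :: Pk k i).length = i + 1 := by simp [hlenP]
          rw [hlen1] at hjk hslice
          have hfrlen : j + 1 < k := by omega
          have e := congrArg (fun l => l[1]?) hslice
          simp only [List.getElem?_cons_succ] at e
          rw [Pk, List.getElem?_map, List.getElem?_take_of_lt (by omega : (0:ℕ) < i),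
            get?_finRange (by omega : 0 < k), List.getElem?_map,
            List.getElem?_take_of_lt (by omega : 1 < i + 1), List.getElem?_drop,
            get?_finRange (by omega : j + 1 < k)] at e
          simp only [Option.map_some, Option.some.injEq, Sum.inl.injEq] at e
          have ev := congrArg Fin.val e
          rw [getElem_finRange_val, getElem_finRange_val] at ev
          omega
      · rcases Nat.lt_or_ge (occ (Tk k) (Pk k i ++ [a])) 2 with hlt | hge
        · omega
        · rcases a with b | c
          swap
          · exfalso
            have h1 := occ_le_count (Tk k) (Pk k i ++ [Sum.inr c]) _
              (List.mem_append_right _ (List.mem_singleton_self _))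
            rw [count_inr] at h1
            omega
          obtain ⟨p, hp⟩ := exists_occurrence (T := Tk k) (S := Pk k i ++ [Sum.inl b]) (by omega)
          have hno : ∀ c : Fin k, Sum.inr c ∉ (Pk k i ++ [Sum.inl b]) := by
            intro c hc
            rcases List.mem_append.1 hc with h | h
            · exact no_inr_Pk c h
            · rw [List.mem_singleton] at h
              exact nomatch h
          obtain ⟨j, hjk, hslice⟩ := slice_of_occurrence (by simp) hno hp
          have hlen1 : (Pk k i ++ [Sum.inl b]).length = i + 1 := by simp [hlenP]
          rw [hlen1] at hjk hslice
          have hj0 : j = 0 := by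
            have e := congrArg (fun l => l[0]?) hslice
            rw [List.getElem?_append_left (by rw [hlenP]; omega : (0:ℕ) < (Pk k i).length),
              Pk, List.getElem?_map, List.getElem?_take_of_lt (by omega : (0:ℕ) < i),
              get?_finRange (by omega : 0 < k), List.getElem?_map,
              List.getElem?_take_of_lt (by omega : (0:ℕ) < i + 1), List.getElem?_drop,
              get?_finRange (by omega : j + 0 < k)] at e
            simp only [Option.map_some, Option.some.injEq, Sum.inl.injEq] at e
            have ev := congrArg Fin.val e
            rw [getElem_finRange_val, getElem_finRange_val] at ev
            omega
          rw [hj0] at hslice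
          rw [hslice, occ_slice (by omega : 1 ≤ i + 1) (by omega : 0 + (i + 1) ≤ k), hoccP]
          omega
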